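/- If φ is an automorphism of the unit disc, then the spectral radius of the composition operator C_φ on the Bloch space equals 1. -/

import Mathlib

open Complex Metric Set Filter MeasureTheory Finset

noncomputable section

/-- The open unit disc in ℂ. -/
def D1 : Set ℂ := Metric.ball 0 1

/-- Analytic (holomorphic) on the open unit disc. -/
def AnalyticOnD (f : ℂ → ℂ) : Prop := DifferentiableOn ℂ f D1

/-- Bloch seminorm. -/
def blochSemi (f : ℂ → ℂ) : ℝ := ⨆ z : D1, (1 - ‖(z : ℂ)‖ ^ 2) * ‖deriv f (z : ℂ)‖

/-- Bloch norm. -/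
def blochNorm (f : ℂ → ℂ) : ℝ := ‖f 0‖ + blochSemi f

/-- Membership in the Bloch space. -/
def InBloch (f : ℂ → ℂ) : Prop :=
  AnalyticOnD f ∧ ∃ C, ∀ z ∈ D1, (1 - ‖z‖ ^ 2) * ‖deriv f z‖ ≤ C

/-- Sup norm over the unit disc. -/
def supNormD (f : ℂ → ℂ) : ℝ := ⨆ z : D1, ‖f (z : ℂ)‖

/-- Weighted composition operator uC_φ. -/
def wco (u φ : ℂ → ℂ) (f : ℂ → ℂ) : ℂ → ℂ := fun z => u z * f (φ z)

/-- Multiplication operator M_u. -/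
def mult (u : ℂ → ℂ) (f : ℂ → ℂ) : ℂ → ℂ := fun z => u z * f z

/-- The weight u_{(n)} = ∏_{j=0}^{n-1} u ∘ φ_j. -/
def wprod (u φ : ℂ → ℂ) (n : ℕ) : ℂ → ℂ := fun z => ∏ j ∈ Finset.range n, u (φ^[j] z)

/-- Boundedness of an operator on the Bloch space. -/
def BddOnBloch (T : (ℂ → ℂ) → (ℂ → ℂ)) : Prop :=
  ∃ C, ∀ f, InBloch f → InBloch (T f) ∧ blochNorm (T f) ≤ C * blochNorm f

/-- Operator norm on the Bloch space. -/
def opNormB (T : (ℂ → ℂ) → (ℂ → ℂ)) : ℝ :=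
  sInf {C : ℝ | 0 ≤ C ∧ ∀ f, InBloch f → blochNorm (T f) ≤ C * blochNorm f}

/-- Invertibility of an operator on the Bloch space (bounded two-sided inverse). -/
def InvertibleOnBloch (T : (ℂ → ℂ) → (ℂ → ℂ)) : Prop :=
  BddOnBloch T ∧ ∃ S, BddOnBloch S ∧
    ∀ f, InBloch f → Set.EqOn (S (T f)) f D1 ∧ Set.EqOn (T (S f)) f D1

/-- Spectrum of an operator acting on the Bloch space. -/
def blochSpectrum (T : (ℂ → ℂ) → (ℂ → ℂ)) : Set ℂ :=
  {lam | ¬ InvertibleOnBloch (fun f z => lam * f z - T f z)}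

/-- Automorphism of the unit disc (Möbius form). -/
def IsDiscAuto (φ : ℂ → ℂ) : Prop :=
  ∃ lam a : ℂ, ‖lam‖ = 1 ∧ a ∈ D1 ∧ ∀ z, φ z = lam * (a - z) / (1 - (starRingEnd ℂ) a * z)

/-- Hyperbolic distance on the unit disc. -/
def hypDist (z w : ℂ) : ℝ :=
  (1 / 2) * Real.log ((1 + ‖(z - w) / (1 - (starRingEnd ℂ) z * w)‖) /
    (1 - ‖(z - w) / (1 - (starRingEnd ℂ) z * w)‖))

/-- The disc algebra A(𝔻). -/
def InDiscAlgebra (u : ℂ → ℂ) : Prop :=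
  ContinuousOn u (Metric.closedBall 0 1) ∧ AnalyticOnD u

/-- u is bounded away from zero on the unit disc. -/
def BoundedAwayFromZero (u : ℂ → ℂ) : Prop := ∃ δ > 0, ∀ z ∈ D1, δ ≤ ‖u z‖

/-- Parabolic automorphism with unique fixed point a on the unit circle (φ'(a)=1). -/
def IsParabolicAuto (φ : ℂ → ℂ) (a : ℂ) : Prop :=
  IsDiscAuto φ ∧ ‖a‖ = 1 ∧ φ a = a ∧ deriv φ a = 1 ∧
    ∀ w, ‖w‖ ≤ 1 → φ w = w → w = a

/-- Hyperbolic automorphism with attractive fixed point a and repulsive fixed point b. -/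
def IsHyperbolicAuto (φ : ℂ → ℂ) (a b : ℂ) : Prop :=
  IsDiscAuto φ ∧ ‖a‖ = 1 ∧ ‖b‖ = 1 ∧ a ≠ b ∧ φ a = a ∧ φ b = b ∧
    ∃ μ : ℝ, 0 < μ ∧ μ < 1 ∧ deriv φ a = (μ : ℂ)

/-- Square of the Dirichlet norm (normalized area measure on 𝔻). -/
def dirichletNormSq (f : ℂ → ℂ) : ℝ :=
  ‖f 0‖ ^ 2 + (1 / Real.pi) * ∫ z in D1, ‖deriv f z‖ ^ 2

/-- Dirichlet norm. -/
def dirichletNorm (f : ℂ → ℂ) : ℝ := Real.sqrt (dirichletNormSq f)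

/-- Membership in the Dirichlet space. -/
def InDirichlet (f : ℂ → ℂ) : Prop :=
  AnalyticOnD f ∧ MeasureTheory.IntegrableOn (fun z => ‖deriv f z‖ ^ 2) D1

/-- Boundedness of an operator on the Dirichlet space. -/
def BddOnDirichlet (T : (ℂ → ℂ) → (ℂ → ℂ)) : Prop :=
  ∃ C, ∀ f, InDirichlet f → InDirichlet (T f) ∧ dirichletNorm (T f) ≤ C * dirichletNorm f

/-- Operator norm on the Dirichlet space. -/
def opNormDir (T : (ℂ → ℂ) → (ℂ → ℂ)) : ℝ :=
  sInf {C : ℝ | 0 ≤ C ∧ ∀ f, InDirichlet f → dirichletNorm (T f) ≤ C * dirichletNorm f}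

/-- Invertibility of an operator on the Dirichlet space. -/
def InvertibleOnDirichlet (T : (ℂ → ℂ) → (ℂ → ℂ)) : Prop :=
  BddOnDirichlet T ∧ ∃ S, BddOnDirichlet S ∧
    ∀ f, InDirichlet f → Set.EqOn (S (T f)) f D1 ∧ Set.EqOn (T (S f)) f D1

/-- Spectrum of an operator on the Dirichlet space. -/
def dirichletSpectrum (T : (ℂ → ℂ) → (ℂ → ℂ)) : Set ℂ :=
  {lam | ¬ InvertibleOnDirichlet (fun f z => lam * f z - T f z)}

/-- Operator norm of M_{u'} : B → H^∞_{v₁}. -/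
def opNormBtoHv1 (u : ℂ → ℂ) : ℝ :=
  sInf {C : ℝ | 0 ≤ C ∧ ∀ f, InBloch f → ∀ z ∈ D1,
    (1 - ‖z‖ ^ 2) * ‖deriv u z * f z‖ ≤ C * blochNorm f}

/-- Operator norm of M_{u'} : 𝒟 → A². -/
def opNormDtoA2 (u : ℂ → ℂ) : ℝ :=
  sInf {C : ℝ | 0 ≤ C ∧ ∀ f, InDirichlet f →
    Real.sqrt ((1 / Real.pi) * ∫ z in D1, ‖deriv u z * f z‖ ^ 2) ≤ C * dirichletNorm f}

/-- The logarithmic weight log(e/(1-|z|²)). -/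
def logWeight (z : ℂ) : ℝ := Real.log (Real.exp 1 / (1 - ‖z‖ ^ 2))

/-- Characterization of multipliers of the Bloch space: u ∈ H^∞ and the log condition. -/
def MultBChar (u : ℂ → ℂ) : Prop :=
  (∃ M, ∀ z ∈ D1, ‖u z‖ ≤ M) ∧
  (∃ M, ∀ z ∈ D1, (1 - ‖z‖ ^ 2) * ‖deriv u z‖ * logWeight z ≤ M)


lemma nsq_norm (w : ℂ) : normSq w = ‖w‖ ^ 2 := by
  rw [Complex.sq_norm]

lemma mobId (a z : ℂ) : normSq (1 - (starRingEnd ℂ) a * z) - normSq (a - z)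
    = (1 - normSq a) * (1 - normSq z) := by
  have h : ((normSq (1 - (starRingEnd ℂ) a * z) - normSq (a - z) : ℝ) : ℂ)
      = (((1 - normSq a) * (1 - normSq z) : ℝ) : ℂ) := by
    push_cast
    simp only [← Complex.mul_conj]
    simp only [map_sub, map_mul, map_one, Complex.conj_conj]
    ring
  exact_mod_cast h

lemma denom_ne {a z : ℂ} (ha : ‖a‖ < 1) (hz : ‖z‖ < 1) :
    1 - (starRingEnd ℂ) a * z ≠ 0 := by
  intro h
  have h1 : (starRingEnd ℂ) a * z = 1 := by linear_combination -h
  have : ‖(starRingEnd ℂ) a * z‖ < 1 := by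
    rw [norm_mul, RCLike.norm_conj]
    nlinarith [norm_nonneg a, norm_nonneg z]
  rw [h1] at this; simp at this

lemma normSq_pos_denom {a z : ℂ} (ha : ‖a‖ < 1) (hz : ‖z‖ < 1) :
    0 < normSq (1 - (starRingEnd ℂ) a * z) :=
  normSq_pos.2 (denom_ne ha hz)

lemma normSq_denom_le_four {a z : ℂ} (ha : ‖a‖ < 1) (hz : ‖z‖ < 1) :
    normSq (1 - (starRingEnd ℂ) a * z) ≤ 4 := by
  have h : ‖1 - (starRingEnd ℂ) a * z‖ ≤ 2 := by
    calc ‖1 - (starRingEnd ℂ) a * z‖ ≤ ‖(1:ℂ)‖ + ‖(starRingEnd ℂ) a * z‖ := norm_sub_le _ _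
    _ ≤ 2 := by
        rw [norm_mul, RCLike.norm_conj, norm_one]
        nlinarith [norm_nonneg a, norm_nonneg z]
  have := Complex.sq_norm (1 - (starRingEnd ℂ) a * z)
  nlinarith [norm_nonneg (1 - (starRingEnd ℂ) a * z)]

lemma mob_sub_one {lam a z : ℂ} (hlam : ‖lam‖ = 1) (ha : ‖a‖ < 1) (hz : ‖z‖ < 1) :
    1 - ‖lam * (a - z) / (1 - (starRingEnd ℂ) a * z)‖ ^ 2
      = (1 - normSq a) * (1 - normSq z) / normSq (1 - (starRingEnd ℂ) a * z) := by
  have hd := normSq_pos_denom ha hz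
  have h1 : ‖lam * (a - z) / (1 - (starRingEnd ℂ) a * z)‖ ^ 2
      = normSq (a - z) / normSq (1 - (starRingEnd ℂ) a * z) := by
    rw [norm_div, norm_mul, hlam, one_mul, div_pow, nsq_norm, nsq_norm]
  rw [h1, eq_div_iff hd.ne', sub_mul, div_mul_cancel₀ _ hd.ne', one_mul, ← mobId a z]

lemma mob_mem {lam a z : ℂ} (hlam : ‖lam‖ = 1) (ha : ‖a‖ < 1) (hz : ‖z‖ < 1) :
    ‖lam * (a - z) / (1 - (starRingEnd ℂ) a * z)‖ < 1 := by
  have h := mob_sub_one hlam ha hz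
  have hd := normSq_pos_denom ha hz
  have hna : normSq a < 1 := by
    have := Complex.sq_norm a
    nlinarith [norm_nonneg a]
  have hnz : normSq z < 1 := by
    have := Complex.sq_norm z
    nlinarith [norm_nonneg z]
  have hpos : 0 < (1 - normSq a) * (1 - normSq z) / normSq (1 - (starRingEnd ℂ) a * z) :=
    div_pos (mul_pos (by linarith) (by linarith)) hd
  nlinarith [norm_nonneg (lam * (a - z) / (1 - (starRingEnd ℂ) a * z))]

lemma mob_deriv_norm {lam a z : ℂ} (hlam : ‖lam‖ = 1) (ha : ‖a‖ < 1) (hz : ‖z‖ < 1) :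
    (1 - ‖z‖ ^ 2) * ‖lam * ((normSq a : ℂ) - 1) / (1 - (starRingEnd ℂ) a * z) ^ 2‖
      = 1 - ‖lam * (a - z) / (1 - (starRingEnd ℂ) a * z)‖ ^ 2 := by
  have hd := normSq_pos_denom ha hz
  have hna : normSq a ≤ 1 := by
    have := Complex.sq_norm a
    nlinarith [norm_nonneg a]
  have h1 : ‖lam * ((normSq a : ℂ) - 1) / (1 - (starRingEnd ℂ) a * z) ^ 2‖
      = (1 - normSq a) / normSq (1 - (starRingEnd ℂ) a * z) := by
    rw [norm_div, norm_mul, hlam, one_mul, norm_pow]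
    have : ((normSq a : ℂ) - 1) = ((normSq a - 1 : ℝ) : ℂ) := by push_cast; ring
    rw [this, Complex.norm_real, Real.norm_eq_abs, abs_of_nonpos (by linarith)]
    simp only [nsq_norm]
    ring
  rw [h1, mob_sub_one hlam ha hz]
  have hz2 : ‖z‖ ^ 2 = normSq z := by
    rw [Complex.sq_norm]
  rw [hz2]; ring

lemma hasDerivAt_mob {lam a z : ℂ} (h0 : 1 - (starRingEnd ℂ) a * z ≠ 0) :
    HasDerivAt (fun w => lam * (a - w) / (1 - (starRingEnd ℂ) a * w))
      (lam * ((normSq a : ℂ) - 1) / (1 - (starRingEnd ℂ) a * z) ^ 2) z := by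
  have h1 : HasDerivAt (fun w : ℂ => lam * (a - w)) (-lam) z := by
    simpa using (((hasDerivAt_id z).const_sub a).const_mul lam)
  have h2 : HasDerivAt (fun w : ℂ => 1 - (starRingEnd ℂ) a * w) (-(starRingEnd ℂ) a) z := by
    simpa using (((hasDerivAt_id z).const_mul ((starRingEnd ℂ) a)).const_sub 1)
  have := h1.div h2 h0
  refine this.congr_deriv (Eq.symm ?_)
  rw [div_eq_div_iff (pow_ne_zero 2 h0) (pow_ne_zero 2 h0)]
  linear_combination (-(1 - (starRingEnd ℂ) a * z)^2 * lam) * Complex.mul_conj a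
lemma phi_facts {lam a : ℂ} (hlam : ‖lam‖ = 1) (ha : ‖a‖ < 1) {φ : ℂ → ℂ}
    (hφ : ∀ z, φ z = lam * (a - z) / (1 - (starRingEnd ℂ) a * z)) {z : ℂ} (hz : ‖z‖ < 1) :
    ‖φ z‖ < 1 ∧ (∃ d : ℂ, HasDerivAt φ d z ∧ (1 - ‖z‖ ^ 2) * ‖d‖ = 1 - ‖φ z‖ ^ 2) ∧
      (1 - ‖a‖ ^ 2) / 4 * (1 - ‖z‖ ^ 2) ≤ 1 - ‖φ z‖ ^ 2 := by
  have hfun : φ = fun w => lam * (a - w) / (1 - (starRingEnd ℂ) a * w) := funext hφ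
  subst hfun
  refine ⟨mob_mem hlam ha hz, ⟨_, hasDerivAt_mob (denom_ne ha hz),
    mob_deriv_norm hlam ha hz⟩, ?_⟩
  rw [mob_sub_one hlam ha hz]
  have h4 := normSq_denom_le_four (a := a) (z := z) ha hz
  have hp := normSq_pos_denom (a := a) (z := z) ha hz
  rw [nsq_norm, nsq_norm]
  have ha2 : ‖a‖ ^ 2 ≤ 1 := by nlinarith [norm_nonneg a]
  have hz2 : ‖z‖ ^ 2 ≤ 1 := by nlinarith [norm_nonneg z]
  have hnum : 0 ≤ (1 - ‖a‖ ^ 2) * (1 - ‖z‖ ^ 2) := by nlinarith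
  rw [div_mul_eq_mul_div, div_le_div_iff₀ (by norm_num) hp]
  nlinarith

lemma iter_facts {lam a : ℂ} (hlam : ‖lam‖ = 1) (ha : ‖a‖ < 1) {φ : ℂ → ℂ}
    (hφ : ∀ z, φ z = lam * (a - z) / (1 - (starRingEnd ℂ) a * z)) (n : ℕ) {z : ℂ}
    (hz : ‖z‖ < 1) :
    ‖φ^[n] z‖ < 1 ∧
      (∃ d : ℂ, HasDerivAt (φ^[n]) d z ∧ (1 - ‖z‖ ^ 2) * ‖d‖ = 1 - ‖φ^[n] z‖ ^ 2) ∧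
      ((1 - ‖a‖ ^ 2) / 4) ^ n * (1 - ‖z‖ ^ 2) ≤ 1 - ‖φ^[n] z‖ ^ 2 := by
  induction n with
  | zero =>
    refine ⟨by simpa using hz, ⟨1, hasDerivAt_id z, by simp⟩, by simp⟩
  | succ n ih =>
    obtain ⟨hmem, ⟨d, hd, hdeq⟩, hlow⟩ := ih
    obtain ⟨hmem', ⟨e, he, heeq⟩, hlow'⟩ := phi_facts hlam ha hφ hmem
    have hiter : φ^[n + 1] = φ ∘ φ^[n] := Function.iterate_succ' φ n
    have happ : φ^[n + 1] z = φ (φ^[n] z) := by rw [hiter]; rfl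
    refine ⟨by rw [happ]; exact hmem', ⟨e * d, ?_, ?_⟩, ?_⟩
    · rw [hiter]; exact he.comp z hd
    · rw [happ, norm_mul]
      calc (1 - ‖z‖ ^ 2) * (‖e‖ * ‖d‖) = ‖e‖ * ((1 - ‖z‖ ^ 2) * ‖d‖) := by ring
        _ = ‖e‖ * (1 - ‖φ^[n] z‖ ^ 2) := by rw [hdeq]
        _ = (1 - ‖φ^[n] z‖ ^ 2) * ‖e‖ := by ring
        _ = 1 - ‖φ (φ^[n] z)‖ ^ 2 := heeq
    · rw [happ]
      have hc : (0:ℝ) ≤ (1 - ‖a‖ ^ 2) / 4 := by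
        have := norm_nonneg a; nlinarith
      calc ((1 - ‖a‖ ^ 2) / 4) ^ (n + 1) * (1 - ‖z‖ ^ 2)
          = (1 - ‖a‖ ^ 2) / 4 * (((1 - ‖a‖ ^ 2) / 4) ^ n * (1 - ‖z‖ ^ 2)) := by ring
        _ ≤ (1 - ‖a‖ ^ 2) / 4 * (1 - ‖φ^[n] z‖ ^ 2) := by
            exact mul_le_mul_of_nonneg_left hlow hc
        _ ≤ 1 - ‖φ (φ^[n] z)‖ ^ 2 := hlow'

lemma growth {f : ℂ → ℂ} (hf : DifferentiableOn ℂ f (Metric.ball 0 1)) {S : ℝ} (hS : 0 ≤ S)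
    (hb : ∀ z : ℂ, ‖z‖ < 1 → (1 - ‖z‖ ^ 2) * ‖deriv f z‖ ≤ S) {w : ℂ} (hw : ‖w‖ < 1) :
    ‖f w - f 0‖ ≤ S * Real.log (2 / (1 - ‖w‖ ^ 2)) := by
  set r : ℝ := ‖w‖ with hr
  have hr0 : 0 ≤ r := norm_nonneg w
  -- derivative of g along the segment
  have hda : ∀ t : ℝ, t ∈ Set.Icc (0:ℝ) 1 →
      HasDerivAt (fun t : ℝ => f ((t:ℂ) * w) - f 0) (w * deriv f ((t:ℂ) * w)) t := by
    intro t ht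
    have htw : ‖(t:ℂ) * w‖ < 1 := by
      rw [norm_mul, Complex.norm_real, Real.norm_eq_abs, _root_.abs_of_nonneg ht.1]
      nlinarith [ht.2]
    have hmem : Metric.ball (0:ℂ) 1 ∈ nhds ((t:ℂ) * w) :=
      Metric.isOpen_ball.mem_nhds (by simpa [Metric.mem_ball, dist_zero_right] using htw)
    have hfd : DifferentiableAt ℂ f ((t:ℂ) * w) := hf.differentiableAt hmem
    have hinner : HasDerivAt (fun t : ℝ => (t:ℂ) * w) w t := by
      simpa using (Complex.ofRealCLM.hasDerivAt.mul_const w)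
    have := (hfd.hasDerivAt.scomp t hinner)
    simpa [smul_eq_mul, mul_comm] using this.sub_const (f 0)
  have hd1 : ∀ t : ℝ, t ∈ Set.Icc (0:ℝ) 1 → 0 < 1 - t * r := by
    intro t ht
    nlinarith [ht.1, ht.2, hr0, hw]
  -- derivative of the boundary function
  have hBd : ∀ t : ℝ, t ∈ Set.Icc (0:ℝ) 1 →
      HasDerivAt (fun t : ℝ => S * -Real.log (1 - t * r)) (S * (r / (1 - t * r))) t := by
    intro t ht
    have h1 : HasDerivAt (fun t : ℝ => 1 - t * r) (-r) t := by
      simpa using ((hasDerivAt_id t).mul_const r).const_sub 1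
    have h2 := (Real.hasDerivAt_log (hd1 t ht).ne').comp t h1
    have := (h2.neg).const_mul S
    refine this.congr_deriv ?_
    ring
  -- bound on the derivative
  have hbound : ∀ t : ℝ, t ∈ Set.Icc (0:ℝ) 1 →
      ‖w * deriv f ((t:ℂ) * w)‖ ≤ S * (r / (1 - t * r)) := by
    intro t ht
    have htr := hd1 t ht
    have htw : ‖(t:ℂ) * w‖ = t * r := by
      rw [norm_mul, Complex.norm_real, Real.norm_eq_abs, _root_.abs_of_nonneg ht.1]
    have htw1 : ‖(t:ℂ) * w‖ < 1 := by rw [htw]; nlinarith [ht.1, ht.2]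
    have hb' := hb _ htw1
    rw [htw] at hb'
    have hdn : 0 ≤ ‖deriv f ((t:ℂ) * w)‖ := norm_nonneg _
    have key : ‖deriv f ((t:ℂ) * w)‖ * (1 - t * r) ≤ S := by
      nlinarith [ht.1, ht.2, hr0, mul_nonneg ht.1 hr0]
    rw [norm_mul, ← hr, mul_div_assoc', le_div_iff₀ htr]
    nlinarith
  -- apply the mean value inequality
  have hcont : ContinuousOn (fun t : ℝ => f ((t:ℂ) * w) - f 0) (Set.Icc 0 1) :=
    fun t ht => ((hda t ht).continuousAt).continuousWithinAt
  have hBcont : ContinuousOn (fun t : ℝ => S * -Real.log (1 - t * r)) (Set.Icc 0 1) :=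
    fun t ht => ((hBd t ht).continuousAt).continuousWithinAt
  have := image_norm_le_of_norm_deriv_right_le_deriv_boundary' hcont
    (fun t ht => (hda t (Set.mem_Icc_of_Ico ht)).hasDerivWithinAt)
    (by simp) hBcont
    (fun t ht => (hBd t (Set.mem_Icc_of_Ico ht)).hasDerivWithinAt)
    (fun t ht => hbound t (Set.mem_Icc_of_Ico ht))
    (Set.right_mem_Icc.2 zero_le_one)
  simp only [Complex.ofReal_one, one_mul] at this
  refine this.trans ?_
  have h1r : 0 < 1 - r := by linarith
  have hlog : -Real.log (1 - r) ≤ Real.log (2 / (1 - r ^ 2)) := by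
    rw [← Real.log_inv]
    apply Real.log_le_log (by positivity)
    rw [inv_eq_one_div, div_le_div_iff₀ h1r (by nlinarith)]
    nlinarith
  calc S * -Real.log (1 - r) ≤ S * Real.log (2 / (1 - r ^ 2)) :=
        mul_le_mul_of_nonneg_left hlog hS
    _ = S * Real.log (2 / (1 - ‖w‖ ^ 2)) := by rw [hr]
lemma mem_D1 {z : ℂ} : z ∈ D1 ↔ ‖z‖ < 1 := by rw [D1, mem_ball_zero_iff]

instance : Nonempty ↥D1 := ⟨⟨0, by rw [mem_D1]; simp⟩⟩

lemma main_est {lam a : ℂ} (hlam : ‖lam‖ = 1) (ha : ‖a‖ < 1) {φ : ℂ → ℂ}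
    (hφ : ∀ z, φ z = lam * (a - z) / (1 - (starRingEnd ℂ) a * z)) (n : ℕ)
    {f : ℂ → ℂ} (hf : InBloch f) :
    blochNorm (f ∘ φ^[n])
      ≤ (2 + Real.log 2 + n * Real.log ((1 - ‖a‖ ^ 2) / 4)⁻¹) * blochNorm f := by
  obtain ⟨hfd, C, hC⟩ := hf
  set S := blochSemi f with hSdef
  set c : ℝ := (1 - ‖a‖ ^ 2) / 4 with hcdef
  have ha2 : ‖a‖ ^ 2 < 1 := by nlinarith [norm_nonneg a]
  have hc0 : 0 < c := by rw [hcdef]; linarith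
  have hc1 : c ≤ 1 := by rw [hcdef]; nlinarith [norm_nonneg a]
  have hL0 : 0 ≤ Real.log c⁻¹ := Real.log_nonneg (one_le_inv_iff₀.mpr ⟨hc0, hc1⟩)
  have hfd' : DifferentiableOn ℂ f (Metric.ball 0 1) := by rw [← D1]; exact hfd
  have hSb : ∀ z : ℂ, ‖z‖ < 1 → (1 - ‖z‖ ^ 2) * ‖deriv f z‖ ≤ S := by
    intro z hz
    have hb : BddAbove (Set.range fun z : D1 => (1 - ‖(z : ℂ)‖ ^ 2) * ‖deriv f (z : ℂ)‖) := by
      refine ⟨C, ?_⟩; rintro x ⟨w, rfl⟩; exact hC w w.2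
    exact le_ciSup hb ⟨z, mem_D1.mpr hz⟩
  have hS0 : 0 ≤ S := by
    have h1 := hSb 0 (by simp)
    have h2 : 0 ≤ (1 - ‖(0 : ℂ)‖ ^ 2) * ‖deriv f 0‖ := by
      simp only [norm_zero]; positivity
    linarith
  have hsemi : blochSemi (f ∘ φ^[n]) ≤ S := by
    apply ciSup_le
    rintro ⟨z, hzD⟩
    have hz : ‖z‖ < 1 := mem_D1.mp hzD
    obtain ⟨hmem, ⟨d, hd, hdeq⟩, -⟩ := iter_facts hlam ha hφ n hz
    have hnb : Metric.ball (0 : ℂ) 1 ∈ nhds (φ^[n] z) :=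
      Metric.isOpen_ball.mem_nhds (mem_ball_zero_iff.mpr hmem)
    have hfa : DifferentiableAt ℂ f (φ^[n] z) := hfd'.differentiableAt hnb
    have hcomp : HasDerivAt (f ∘ φ^[n]) (deriv f (φ^[n] z) * d) z := hfa.hasDerivAt.comp z hd
    rw [hcomp.deriv, norm_mul]
    calc (1 - ‖z‖ ^ 2) * (‖deriv f (φ^[n] z)‖ * ‖d‖)
        = ‖deriv f (φ^[n] z)‖ * ((1 - ‖z‖ ^ 2) * ‖d‖) := by ring
      _ = ‖deriv f (φ^[n] z)‖ * (1 - ‖φ^[n] z‖ ^ 2) := by rw [hdeq]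
      _ = (1 - ‖φ^[n] z‖ ^ 2) * ‖deriv f (φ^[n] z)‖ := by ring
      _ ≤ S := hSb _ hmem
  have h0 : ‖(0 : ℂ)‖ < 1 := by simp
  obtain ⟨hm0, -, hlow0⟩ := iter_facts hlam ha hφ n h0
  have hlow0' : c ^ n ≤ 1 - ‖φ^[n] 0‖ ^ 2 := by simpa using hlow0
  have hcn : (0 : ℝ) < c ^ n := pow_pos hc0 n
  have hval : ‖f (φ^[n] 0)‖ ≤ ‖f 0‖ + S * (Real.log 2 + n * Real.log c⁻¹) := by
    have hg := growth hfd' hS0 hSb hm0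
    have hpos : 0 < 1 - ‖φ^[n] 0‖ ^ 2 := lt_of_lt_of_le hcn hlow0'
    have h2 : 2 / (1 - ‖φ^[n] 0‖ ^ 2) ≤ 2 / c ^ n := by gcongr
    have hlog : Real.log (2 / (1 - ‖φ^[n] 0‖ ^ 2)) ≤ Real.log 2 + n * Real.log c⁻¹ := by
      calc Real.log (2 / (1 - ‖φ^[n] 0‖ ^ 2)) ≤ Real.log (2 / c ^ n) :=
            Real.log_le_log (by positivity) h2
        _ = Real.log 2 + n * Real.log c⁻¹ := by
            rw [div_eq_mul_inv, ← inv_pow,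
              Real.log_mul two_ne_zero (pow_ne_zero n (inv_ne_zero hc0.ne')), Real.log_pow]
    have htri : ‖f (φ^[n] 0)‖ ≤ ‖f 0‖ + ‖f (φ^[n] 0) - f 0‖ := by
      have := norm_add_le (f 0) (f (φ^[n] 0) - f 0); simpa using this
    have := mul_le_mul_of_nonneg_left hlog hS0
    linarith
  show ‖(f ∘ φ^[n]) 0‖ + blochSemi (f ∘ φ^[n])
      ≤ (2 + Real.log 2 + n * Real.log c⁻¹) * (‖f 0‖ + S)
  have hstep : ‖(f ∘ φ^[n]) 0‖ + blochSemi (f ∘ φ^[n])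
      ≤ (‖f 0‖ + S * (Real.log 2 + n * Real.log c⁻¹)) + S := add_le_add hval hsemi
  refine hstep.trans ?_
  have hlog2 : (0:ℝ) ≤ Real.log 2 := Real.log_nonneg one_le_two
  have hnL : (0:ℝ) ≤ (n : ℝ) * Real.log c⁻¹ := mul_nonneg (Nat.cast_nonneg n) hL0
  nlinarith [norm_nonneg (f 0), mul_nonneg hlog2 (norm_nonneg (f 0)),
    mul_nonneg hnL (norm_nonneg (f 0)), hS0]

lemma const_one_bloch : InBloch (fun _ : ℂ => (1 : ℂ)) := by
  refine ⟨differentiableOn_const _, 0, fun z _ => ?_⟩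
  simp [deriv_const']

lemma const_one_norm : blochNorm (fun _ : ℂ => (1 : ℂ)) = 1 := by
  rw [blochNorm, blochSemi]
  simp only [deriv_const', norm_zero, mul_zero]
  rw [ciSup_const]
  simp

lemma opNorm_bounds {lam a : ℂ} (hlam : ‖lam‖ = 1) (ha : ‖a‖ < 1) {φ : ℂ → ℂ}
    (hφ : ∀ z, φ z = lam * (a - z) / (1 - (starRingEnd ℂ) a * z)) (n : ℕ) :
    1 ≤ opNormB (fun f => f ∘ φ^[n]) ∧
      opNormB (fun f => f ∘ φ^[n])
        ≤ 2 + Real.log 2 + n * Real.log ((1 - ‖a‖ ^ 2) / 4)⁻¹ := by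
  set c : ℝ := (1 - ‖a‖ ^ 2) / 4 with hcdef
  have ha2 : ‖a‖ ^ 2 < 1 := by nlinarith [norm_nonneg a]
  have hc0 : 0 < c := by rw [hcdef]; linarith
  have hc1 : c ≤ 1 := by rw [hcdef]; nlinarith [norm_nonneg a]
  have hL0 : 0 ≤ Real.log c⁻¹ := Real.log_nonneg (one_le_inv_iff₀.mpr ⟨hc0, hc1⟩)
  have hlog2 : (0:ℝ) ≤ Real.log 2 := Real.log_nonneg one_le_two
  have hnL : (0:ℝ) ≤ (n : ℝ) * Real.log c⁻¹ := mul_nonneg (Nat.cast_nonneg n) hL0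
  have hK0 : 0 ≤ 2 + Real.log 2 + n * Real.log c⁻¹ := by linarith
  have hmem : (2 + Real.log 2 + n * Real.log c⁻¹) ∈
      {C : ℝ | 0 ≤ C ∧ ∀ f, InBloch f → blochNorm (f ∘ φ^[n]) ≤ C * blochNorm f} :=
    ⟨hK0, fun f hf => main_est hlam ha hφ n hf⟩
  have hbdd : BddBelow {C : ℝ | 0 ≤ C ∧ ∀ f, InBloch f →
      blochNorm (f ∘ φ^[n]) ≤ C * blochNorm f} := ⟨0, fun C hC => hC.1⟩
  constructor
  · apply le_csInf ⟨_, hmem⟩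
    rintro C ⟨hC0, hC⟩
    have h1 := hC (fun _ => (1 : ℂ)) const_one_bloch
    have h2 : ((fun _ : ℂ => (1 : ℂ)) ∘ φ^[n]) = fun _ : ℂ => (1 : ℂ) := rfl
    rw [h2, const_one_norm, mul_one] at h1
    exact h1
  · exact csInf_le hbdd hmem

lemma lim_aux {A L : ℝ} (hA : 2 ≤ A) (hL : 0 ≤ L) {u : ℕ → ℝ}
    (h1 : ∀ n, 1 ≤ u n) (h2 : ∀ n, u n ≤ A + n * L) :
    Tendsto (fun n : ℕ => u n ^ ((1:ℝ)/n)) atTop (nhds 1) := by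
  have hApos : ∀ n : ℕ, (0:ℝ) < A + n * L := by
    intro n
    have : (0:ℝ) ≤ (n:ℝ) * L := mul_nonneg (Nat.cast_nonneg n) hL
    linarith
  have hlogdiv : Tendsto (fun n : ℕ => Real.log (A + n * L) / n) atTop (nhds 0) := by
    have t1 : Tendsto (fun n : ℕ => Real.log (A + L) / n) atTop (nhds 0) :=
      tendsto_const_div_atTop_nhds_zero_nat _
    have t2 : Tendsto (fun n : ℕ => Real.log n / n) atTop (nhds 0) :=
      (Real.isLittleO_log_id_atTop.tendsto_div_nhds_zero).comp tendsto_natCast_atTop_atTop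
    have t3 : Tendsto (fun n : ℕ => Real.log (A + L) / n + Real.log n / n) atTop (nhds 0) := by
      simpa using t1.add t2
    apply tendsto_of_tendsto_of_tendsto_of_le_of_le' tendsto_const_nhds t3
    · filter_upwards with n
      have h1n : (1:ℝ) ≤ A + n * L := by
        have : (0:ℝ) ≤ (n:ℝ) * L := mul_nonneg (Nat.cast_nonneg n) hL
        linarith
      exact div_nonneg (Real.log_nonneg h1n) (Nat.cast_nonneg n)
    · filter_upwards [eventually_ge_atTop 1] with n hn
      have hn1 : (1:ℝ) ≤ (n:ℝ) := by exact_mod_cast hn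
      have hle : A + n * L ≤ (A + L) * n := by nlinarith
      have hlog : Real.log (A + n * L) ≤ Real.log (A + L) + Real.log n := by
        calc Real.log (A + n * L) ≤ Real.log ((A + L) * n) :=
              Real.log_le_log (hApos n) hle
          _ = Real.log (A + L) + Real.log n :=
              Real.log_mul (by linarith) (by positivity)
      rw [← add_div]
      gcongr
  have hupper : Tendsto (fun n : ℕ => (A + n * L) ^ ((1:ℝ)/n)) atTop (nhds 1) := by
    have hexp : Tendsto (fun n : ℕ => Real.exp (Real.log (A + n * L) / n)) atTop
        (nhds (Real.exp 0)) := (Real.continuous_exp.tendsto 0).comp hlogdiv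
    rw [Real.exp_zero] at hexp
    apply hexp.congr
    intro n
    rw [Real.rpow_def_of_pos (hApos n), one_div, mul_comm, ← div_eq_mul_inv]
  apply tendsto_of_tendsto_of_tendsto_of_le_of_le tendsto_const_nhds hupper
  · intro n
    have := Real.rpow_le_rpow zero_le_one (h1 n) (by positivity : (0:ℝ) ≤ 1/n)
    rwa [Real.one_rpow] at this
  · intro n
    exact Real.rpow_le_rpow (le_trans zero_le_one (h1 n)) (h2 n) (by positivity)

/-- the spectral radius of C_φ on B equals 1 for automorphisms φ. -/
theorem stmt_10 (φ : ℂ → ℂ) (hφ : IsDiscAuto φ) :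
    Filter.Tendsto (fun n : ℕ => opNormB (fun f => f ∘ φ^[n]) ^ ((1 : ℝ) / n))
      Filter.atTop (nhds 1) := by
  obtain ⟨lam, a, hlam, haD, hphi⟩ := hφ
  have ha : ‖a‖ < 1 := mem_D1.mp haD
  set c : ℝ := (1 - ‖a‖ ^ 2) / 4 with hcdef
  have ha2 : ‖a‖ ^ 2 < 1 := by nlinarith [norm_nonneg a]
  have hc0 : 0 < c := by rw [hcdef]; linarith
  have hc1 : c ≤ 1 := by rw [hcdef]; nlinarith [norm_nonneg a]
  have hL0 : 0 ≤ Real.log c⁻¹ := Real.log_nonneg (one_le_inv_iff₀.mpr ⟨hc0, hc1⟩)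
  have hA : (2:ℝ) ≤ 2 + Real.log 2 := by linarith [Real.log_nonneg (by norm_num : (1:ℝ) ≤ 2)]
  exact lim_aux hA hL0 (fun n => (opNorm_bounds hlam ha hphi n).1)
    (fun n => (opNorm_bounds hlam ha hphi n).2)
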